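/- arXiv:1401.0926 — 6 statements merged into one kernel-verified Lean document; each statement's English description precedes it below -/
import Mathlib

section
/- Let A be an n×n real matrix and L an m×m real matrix. For all but finitely many positive real numbers α, the matrix W = I_m - αL has the property that every nonzero eigenvalue λ of W ⊗ A (Kronecker product) can be uniquely expressed as a product λ = λ_W · λ_A with λ_W an eigenvalue of W and λ_A an eigenvalue of A. -/
open Matrix Kronecker

noncomputable section

/-- Complexification of a real matrix. -/
def cmat {ι : Type*} (M : Matrix ι ι ℝ) : Matrix ι ι ℂ :=
  M.map (algebraMap ℝ ℂ)

/-- `μ` is a (complex) eigenvalue of the square matrix `M`. -/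
def IsEig {ι : Type*} [Fintype ι] (M : Matrix ι ι ℂ) (μ : ℂ) : Prop :=
  ∃ v : ι → ℂ, v ≠ 0 ∧ M.mulVec v = μ • v

/-- Unique Eigenvalue Product Property for the Kronecker product `W ⊗ A`. -/
def UEPP {m n : ℕ} (W : Matrix (Fin m) (Fin m) ℂ) (A : Matrix (Fin n) (Fin n) ℂ) : Prop :=
  ∀ lam : ℂ, lam ≠ 0 → IsEig (W ⊗ₖ A) lam →
    (∃ μ ν : ℂ, IsEig W μ ∧ IsEig A ν ∧ lam = μ * ν) ∧
    (∀ μ ν μ' ν' : ℂ, IsEig W μ → IsEig A ν → IsEig W μ' → IsEig A ν' →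
      lam = μ * ν → lam = μ' * ν' → μ = μ' ∧ ν = ν')

open Polynomial in
lemma my_eval_charpoly {k : ℕ} (M : Matrix (Fin k) (Fin k) ℂ) (t : ℂ) :
    M.charpoly.eval t = (t • (1 : Matrix (Fin k) (Fin k) ℂ) - M).det := by
  rw [Matrix.charpoly, eval_det, Matrix.matPolyEquiv_charmatrix, eval_sub, eval_X, eval_C]
  congr 1
  rw [Matrix.scalar_apply, Matrix.smul_one_eq_diagonal]

lemma isEig_iff_det {k : ℕ} (M : Matrix (Fin k) (Fin k) ℂ) (μ : ℂ) :
    IsEig M μ ↔ (μ • (1 : Matrix (Fin k) (Fin k) ℂ) - M).det = 0 := by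
  rw [← Matrix.exists_mulVec_eq_zero_iff]
  constructor
  · rintro ⟨v, hv, h⟩
    exact ⟨v, hv, by
      rw [Matrix.sub_mulVec, Matrix.smul_mulVec, Matrix.one_mulVec, h, sub_self]⟩
  · rintro ⟨v, hv, h⟩
    refine ⟨v, hv, ?_⟩
    rw [Matrix.sub_mulVec, Matrix.smul_mulVec, Matrix.one_mulVec, sub_eq_zero] at h
    exact h.symm

lemma isEig_iff_root {k : ℕ} (M : Matrix (Fin k) (Fin k) ℂ) (μ : ℂ) :
    IsEig M μ ↔ M.charpoly.IsRoot μ := by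
  rw [isEig_iff_det, Polynomial.IsRoot, my_eval_charpoly]

lemma eig_finite {k : ℕ} (M : Matrix (Fin k) (Fin k) ℂ) : {μ : ℂ | IsEig M μ}.Finite :=
  (Polynomial.finite_setOf_isRoot M.charpoly_monic.ne_zero).subset
    fun μ h => (isEig_iff_root M μ).1 h

lemma telescope {m n : ℕ} (W : Matrix (Fin m) (Fin m) ℂ) (B : Matrix (Fin n) (Fin n) ℂ)
    (V : Matrix (Fin m) (Fin n) ℂ) (lam : ℂ) (hV : W * V * B = lam • V) (l : List ℂ) :
    V * (l.map fun μ => lam • (1 : Matrix (Fin n) (Fin n) ℂ) - μ • B).prod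
      = (l.map fun μ => W - μ • (1 : Matrix (Fin m) (Fin m) ℂ)).prod * V * B ^ l.length := by
  induction l with
  | nil => simp
  | cons a s ih =>
    rw [List.map_cons, List.prod_cons, List.map_cons, List.prod_cons, List.length_cons]
    have h1 : V * (lam • (1 : Matrix (Fin n) (Fin n) ℂ) - a • B)
        = (W - a • (1 : Matrix (Fin m) (Fin m) ℂ)) * V * B := by
      simp only [Matrix.mul_sub, Matrix.sub_mul, Matrix.mul_smul, Matrix.smul_mul,
        Matrix.mul_one, Matrix.one_mul]
      rw [hV]
    have hc : B * (s.map fun μ => lam • (1 : Matrix (Fin n) (Fin n) ℂ) - μ • B).prod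
        = (s.map fun μ => lam • (1 : Matrix (Fin n) (Fin n) ℂ) - μ • B).prod * B := by
      refine (Commute.list_prod_right _ _ fun x hx => ?_).eq
      obtain ⟨μ, _, rfl⟩ := List.mem_map.mp hx
      exact ((Commute.one_right B).smul_right lam).sub_right ((Commute.refl B).smul_right μ)
    calc V * ((lam • 1 - a • B) * (s.map fun μ => lam • 1 - μ • B).prod)
        = (V * (lam • 1 - a • B)) * (s.map fun μ => lam • 1 - μ • B).prod := by
          rw [Matrix.mul_assoc]
      _ = ((W - a • 1) * V * B) * (s.map fun μ => lam • 1 - μ • B).prod := by rw [h1]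
      _ = (W - a • 1) * V * (B * (s.map fun μ => lam • 1 - μ • B).prod) := by
          rw [Matrix.mul_assoc]
      _ = (W - a • 1) * V * ((s.map fun μ => lam • 1 - μ • B).prod * B) := by rw [hc]
      _ = (W - a • 1) * (V * (s.map fun μ => lam • 1 - μ • B).prod) * B := by
          simp only [Matrix.mul_assoc]
      _ = (W - a • 1) * ((s.map fun μ => W - μ • 1).prod * V * B ^ s.length) * B := by
          rw [ih]
      _ = (W - a • 1) * (s.map fun μ => W - μ • 1).prod * V * B ^ (s.length + 1) := by
          rw [pow_succ]
          simp only [Matrix.mul_assoc]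

open Polynomial in
lemma prod_roots_eq_zero {m : ℕ} (W : Matrix (Fin m) (Fin m) ℂ) :
    ((W.charpoly.roots.toList.map fun μ => W - μ • (1 : Matrix (Fin m) (Fin m) ℂ)).prod) = 0 := by
  have h := (IsAlgClosed.splits W.charpoly).eq_prod_roots_of_monic
    W.charpoly_monic
  have hl : W.charpoly = (W.charpoly.roots.toList.map fun a => X - C a).prod := by
    conv_lhs => rw [h, ← Multiset.coe_toList W.charpoly.roots]
    rw [Multiset.map_coe, Multiset.prod_coe]
  have h2 := W.aeval_self_charpoly
  rw [hl, map_list_prod, List.map_map] at h2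
  simpa [Function.comp_def, map_sub, Polynomial.aeval_X, Polynomial.aeval_C,
    Algebra.algebraMap_eq_smul_one] using h2

lemma exists_factor {m n : ℕ} (W : Matrix (Fin m) (Fin m) ℂ) (A : Matrix (Fin n) (Fin n) ℂ)
    {lam : ℂ} (hlam : lam ≠ 0) (h : IsEig (W ⊗ₖ A) lam) :
    ∃ μ ν : ℂ, IsEig W μ ∧ IsEig A ν ∧ lam = μ * ν := by
  obtain ⟨v, hv, hve⟩ := h
  set V : Matrix (Fin m) (Fin n) ℂ := Matrix.of fun k l => v (k, l) with hVdef
  have hVne : V ≠ 0 := by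
    intro h0
    apply hv
    funext p
    have : V p.1 p.2 = 0 := by rw [h0]; rfl
    simpa [hVdef] using this
  have hmat : W * V * Aᵀ = lam • V := by
    ext i j
    have hthis := congrFun hve (i, j)
    simp only [Matrix.mulVec, dotProduct, Pi.smul_apply, smul_eq_mul,
      Matrix.kroneckerMap_apply, Fintype.sum_prod_type] at hthis
    simp only [Matrix.smul_apply, Matrix.mul_apply, Matrix.transpose_apply, smul_eq_mul,
      Finset.sum_mul]
    rw [Finset.sum_comm]
    have hgoal : ∀ (k : Fin m) (x : Fin n),
        W i k * V k x * A j x = W i k * A j x * v (k, x) := fun k x => by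
      simp only [hVdef, Matrix.of_apply]; ring
    simp only [hgoal]
    have hVij : V i j = v (i, j) := rfl
    rw [hVij]
    simpa using hthis
  set l := W.charpoly.roots.toList with hldef
  have key := telescope W Aᵀ V lam hmat l
  rw [prod_roots_eq_zero W, Matrix.zero_mul, Matrix.zero_mul] at key
  set P := (l.map fun μ => lam • (1 : Matrix (Fin n) (Fin n) ℂ) - μ • Aᵀ).prod with hPdef
  have hdet : P.det = 0 := by
    by_contra hd
    have hu : IsUnit P.det := isUnit_iff_ne_zero.mpr hd
    have h3 : V = V * (P * P⁻¹) := by rw [Matrix.mul_nonsing_inv _ hu, Matrix.mul_one]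
    rw [← Matrix.mul_assoc, key, Matrix.zero_mul] at h3
    exact hVne h3
  have hdet2 : (l.map fun μ =>
      (lam • (1 : Matrix (Fin n) (Fin n) ℂ) - μ • Aᵀ).det).prod = 0 := by
    have h4 := map_list_prod (Matrix.detMonoidHom)
      (l.map fun μ => lam • (1 : Matrix (Fin n) (Fin n) ℂ) - μ • Aᵀ)
    rw [List.map_map, Matrix.coe_detMonoidHom] at h4
    exact h4.symm.trans hdet
  rw [List.prod_eq_zero_iff] at hdet2
  obtain ⟨μ, hμmem, hμdet⟩ := List.mem_map.mp hdet2
  have hμdet : (lam • (1 : Matrix (Fin n) (Fin n) ℂ) - μ • Aᵀ).det = 0 := hμdet.symm ▸ rfl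
  have hμroot : μ ∈ W.charpoly.roots := Multiset.mem_toList.mp hμmem
  have hμne : μ ≠ 0 := by
    rintro rfl
    rw [zero_smul, sub_zero, Matrix.det_smul, Matrix.det_one, mul_one] at hμdet
    exact pow_ne_zero _ hlam hμdet
  have hfactor : lam • (1 : Matrix (Fin n) (Fin n) ℂ) - μ • Aᵀ
      = μ • ((lam / μ) • (1 : Matrix (Fin n) (Fin n) ℂ) - Aᵀ) := by
    rw [smul_sub, smul_smul, mul_div_cancel₀ _ hμne]
  rw [hfactor, Matrix.det_smul] at hμdet
  have h2 : ((lam / μ) • (1 : Matrix (Fin n) (Fin n) ℂ) - Aᵀ).det = 0 := by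
    rcases mul_eq_zero.mp hμdet with h | h
    · exact absurd h (pow_ne_zero _ hμne)
    · exact h
  refine ⟨μ, lam / μ, ?_, ?_, ?_⟩
  · exact (isEig_iff_root W μ).2 (Polynomial.isRoot_of_mem_roots hμroot)
  · rw [isEig_iff_det]
    rwa [show (lam / μ) • (1 : Matrix (Fin n) (Fin n) ℂ) - Aᵀ
      = ((lam / μ) • (1 : Matrix (Fin n) (Fin n) ℂ) - A)ᵀ from by
        rw [Matrix.transpose_sub, Matrix.transpose_smul, Matrix.transpose_one],
      Matrix.det_transpose] at h2
  · rw [mul_div_cancel₀ _ hμne]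

lemma cmat_one_sub_smul {m : ℕ} (L : Matrix (Fin m) (Fin m) ℝ) (α : ℝ) :
    cmat ((1 : Matrix (Fin m) (Fin m) ℝ) - α • L) = 1 - (α : ℂ) • cmat L := by
  ext i j
  simp [cmat, Matrix.one_apply, Matrix.sub_apply, Matrix.smul_apply, apply_ite,
    Complex.ofReal_mul]

lemma eig_shift {m : ℕ} (L : Matrix (Fin m) (Fin m) ℝ) {α : ℝ} (hα : α ≠ 0) {μ : ℂ}
    (h : IsEig (cmat ((1 : Matrix (Fin m) (Fin m) ℝ) - α • L)) μ) :
    ∃ ℓ : ℂ, IsEig (cmat L) ℓ ∧ μ = 1 - (α : ℂ) * ℓ := by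
  obtain ⟨v, hv, hve⟩ := h
  rw [cmat_one_sub_smul, Matrix.sub_mulVec, Matrix.one_mulVec, Matrix.smul_mulVec] at hve
  have hc : (α : ℂ) ≠ 0 := Complex.ofReal_ne_zero.mpr hα
  have h2 : (α : ℂ) • (cmat L).mulVec v = v - μ • v := by
    rw [← hve, sub_sub_cancel]
  have hLv : (cmat L).mulVec v = ((1 - μ) / α) • v := by
    calc (cmat L).mulVec v = (α : ℂ)⁻¹ • ((α : ℂ) • (cmat L).mulVec v) :=
          (inv_smul_smul₀ hc _).symm
      _ = (α : ℂ)⁻¹ • (v - μ • v) := by rw [h2]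
      _ = ((1 - μ) / α) • v := by
          rw [div_eq_inv_mul, ← smul_smul]
          congr 1
          rw [sub_smul, one_smul]
  refine ⟨(1 - μ) / α, ⟨v, hv, hLv⟩, ?_⟩
  field_simp
  ring

/-- For all but finitely many positive reals `α`, the matrix `W = I - αL` is such that
`W ⊗ A` satisfies the UEPP. -/
theorem stmt0 (n m : ℕ) (A : Matrix (Fin n) (Fin n) ℝ) (L : Matrix (Fin m) (Fin m) ℝ) :
    {α : ℝ | 0 < α ∧ ¬ UEPP (cmat ((1 : Matrix (Fin m) (Fin m) ℝ) - α • L)) (cmat A)}.Finite := by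
  classical
  have hEL : {ℓ : ℂ | IsEig (cmat L) ℓ}.Finite := eig_finite _
  have hEA : {ν : ℂ | IsEig (cmat A) ν}.Finite := eig_finite _
  set Q : Set (ℂ × ℂ × ℂ × ℂ) :=
    {ℓ : ℂ | IsEig (cmat L) ℓ} ×ˢ {ν : ℂ | IsEig (cmat A) ν} ×ˢ
      {ℓ : ℂ | IsEig (cmat L) ℓ} ×ˢ {ν : ℂ | IsEig (cmat A) ν} with hQdef
  have hQ : Q.Finite := hEL.prod (hEA.prod (hEL.prod hEA))
  set S : ℂ × ℂ × ℂ × ℂ → Set ℝ := fun q =>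
    {α : ℝ | (q.1 * q.2.1 ≠ q.2.2.1 * q.2.2.2 ∨ q.2.1 ≠ q.2.2.2) ∧
      (q.2.1 - q.2.2.2 : ℂ) = (α : ℂ) * (q.1 * q.2.1 - q.2.2.1 * q.2.2.2)} with hSdef
  have hS : ∀ q, (S q).Finite := by
    rintro ⟨ℓ, ν, ℓ', ν'⟩
    apply Set.Subsingleton.finite
    rintro α₁ ⟨hc₁, he₁⟩ α₂ ⟨hc₂, he₂⟩
    simp only at he₁ he₂ hc₁
    by_cases hc : ℓ * ν - ℓ' * ν' = 0
    · exfalso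
      rw [hc, mul_zero] at he₁
      rcases hc₁ with h | h
      · exact h (sub_eq_zero.mp hc)
      · exact h (sub_eq_zero.mp he₁)
    · have : ((α₁ : ℂ)) = ((α₂ : ℂ)) := mul_right_cancel₀ hc (he₁.symm.trans he₂)
      exact_mod_cast this
  have hBadfin : (⋃ q ∈ Q, S q).Finite := hQ.biUnion fun q _ => hS q
  apply hBadfin.subset
  rintro α ⟨hpos, hUE⟩
  by_contra hmem
  apply hUE
  intro lam hlam hEig
  refine ⟨exists_factor _ _ hlam hEig, ?_⟩
  intro μ ν μ' ν' hμ hν hμ' hν' e1 e2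
  obtain ⟨ℓ, hℓ, hμeq⟩ := eig_shift L hpos.ne' hμ
  obtain ⟨ℓ', hℓ', hμ'eq⟩ := eig_shift L hpos.ne' hμ'
  subst hμeq hμ'eq
  have heq : (ν - ν' : ℂ) = (α : ℂ) * (ℓ * ν - ℓ' * ν') := by
    linear_combination e1.symm.trans e2
  have hq : (ℓ, ν, ℓ', ν') ∈ Q := ⟨hℓ, hν, hℓ', hν'⟩
  have hnots : α ∉ S (ℓ, ν, ℓ', ν') := fun hs => hmem (Set.mem_biUnion hq hs)
  have hcond : ℓ * ν = ℓ' * ν' ∧ ν = ν' := by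
    by_contra hcon
    exact hnots ⟨not_and_or.mp hcon, heq⟩
  obtain ⟨hlν, hνν⟩ := hcond
  subst hνν
  have hν0 : ν ≠ 0 := fun h0 => hlam (by rw [e1, h0, mul_zero])
  have hℓeq : ℓ = ℓ' := mul_right_cancel₀ hν0 hlν
  subst hℓeq
  exact ⟨rfl, rfl⟩

end
end

section
/- Let W ∈ ℝ^{m×m} be a matrix all of whose (complex) eigenvalues are simple (algebraic multiplicity 1), and let A ∈ ℝ^{n×n}. Suppose W ⊗ A satisfies the UEPP. Then every eigenvector q of W ⊗ A associated with a nonzero eigenvalue λ can be written as a Kronecker product q = v ⊗ p, where v is an eigenvector of W for λ_W and p is an eigenvector of A for λ_A, with λ = λ_W · λ_A the unique factorization of λ. -/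
open Matrix Kronecker
open Polynomial

noncomputable section

lemma isEig_of_isRoot {m : ℕ} (M : Matrix (Fin m) (Fin m) ℂ) {μ : ℂ}
    (h : M.charpoly.IsRoot μ) : IsEig M μ := by
  have hmap : (charmatrix M).map (Polynomial.evalRingHom μ) =
      μ • (1 : Matrix (Fin m) (Fin m) ℂ) - M := by
    ext i j
    rcases eq_or_ne i j with rfl | hij
    · simp [charmatrix_apply_eq, Matrix.one_apply]
    · simp [charmatrix_apply_ne _ _ _ hij, Matrix.one_apply_ne hij]
  have hdet : (μ • (1 : Matrix (Fin m) (Fin m) ℂ) - M).det = 0 := by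
    rw [← hmap, ← RingHom.mapMatrix_apply, ← RingHom.map_det]
    exact h
  obtain ⟨v, hv0, hv⟩ := (Matrix.exists_mulVec_eq_zero_iff).2 hdet
  refine ⟨v, hv0, ?_⟩
  rw [Matrix.sub_mulVec, Matrix.smul_mulVec, Matrix.one_mulVec, sub_eq_zero] at hv
  exact hv.symm

/-- An eigenbasis with distinct eigenvalues for a matrix all of whose eigenvalues are simple. -/
lemma exists_eigenbasis {m : ℕ} (M : Matrix (Fin m) (Fin m) ℂ)
    (hsimple : ∀ μ : ℂ, IsEig M μ → M.charpoly.rootMultiplicity μ = 1) :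
    ∃ (μ : Fin m → ℂ) (v : Fin m → (Fin m → ℂ)),
      Function.Injective μ ∧ (∀ i, v i ≠ 0) ∧ (∀ i, M.mulVec (v i) = μ i • v i) ∧
      LinearIndependent ℂ v := by
  classical
  set p := M.charpoly with hp
  have hmonic : p.Monic := Matrix.charpoly_monic M
  have hcard : Multiset.card p.roots = m := by
    have hs : p.Splits := IsAlgClosed.splits p
    have := (Polynomial.Splits.natDegree_eq_card_roots hs).symm
    rwa [Matrix.charpoly_natDegree_eq_dim, Fintype.card_fin] at this
  have hnodup : p.roots.Nodup := by
    rw [Multiset.nodup_iff_count_le_one]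
    intro a
    by_cases ha : a ∈ p.roots
    · rw [Polynomial.count_roots]
      have : p.IsRoot a := Polynomial.isRoot_of_mem_roots ha
      rw [hsimple a (isEig_of_isRoot M this)]
    · rw [Multiset.count_eq_zero.mpr ha]
      exact Nat.zero_le 1
  have hfcard : Fintype.card (↥p.roots.toFinset) = m := by
    rw [Fintype.card_coe, Multiset.toFinset_card_of_nodup hnodup, hcard]
  let e : (↥p.roots.toFinset) ≃ Fin m := Fintype.equivFinOfCardEq hfcard
  set μ : Fin m → ℂ := fun i => ((e.symm i : ↥p.roots.toFinset) : ℂ) with hμ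
  have hμinj : Function.Injective μ :=
    Subtype.coe_injective.comp e.symm.injective
  have heig : ∀ i, IsEig M (μ i) := by
    intro i
    apply isEig_of_isRoot
    apply Polynomial.isRoot_of_mem_roots
    exact Multiset.mem_toFinset.mp (e.symm i).2
  choose v hv0 hv using heig
  refine ⟨μ, v, hμinj, hv0, hv, ?_⟩
  apply Module.End.eigenvectors_linearIndependent' (Matrix.mulVecLin M) μ hμinj v
  intro i
  refine ⟨Module.End.mem_eigenspace_iff.2 ?_, hv0 i⟩
  simpa [Matrix.mulVecLin_apply] using hv i

/-- If all eigenvalues of `W` are simple and `W ⊗ A` satisfies the UEPP, then every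
eigenvector of `W ⊗ A` for a nonzero eigenvalue `λ` is a Kronecker product `v ⊗ p` of
eigenvectors of `W` and `A` for the unique factorization `λ = λ_W · λ_A`. -/
theorem stmt2 (m n : ℕ) (W : Matrix (Fin m) (Fin m) ℝ) (A : Matrix (Fin n) (Fin n) ℝ)
    (hsimple : ∀ μ : ℂ, IsEig (cmat W) μ → (cmat W).charpoly.rootMultiplicity μ = 1)
    (huepp : UEPP (cmat W) (cmat A)) :
    ∀ lam : ℂ, lam ≠ 0 →
      ∀ q : Fin m × Fin n → ℂ, q ≠ 0 → (cmat W ⊗ₖ cmat A).mulVec q = lam • q →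
        ∃ (lamW lamA : ℂ) (v : Fin m → ℂ) (p : Fin n → ℂ),
          v ≠ 0 ∧ p ≠ 0 ∧
          (cmat W).mulVec v = lamW • v ∧ (cmat A).mulVec p = lamA • p ∧
          lam = lamW * lamA ∧ q = fun x => v x.1 * p x.2 := by
  classical
  intro lam hlam q hq0 hq
  obtain ⟨x₀, hx₀⟩ : ∃ x, q x ≠ 0 := Function.ne_iff.mp hq0
  haveI : Nonempty (Fin m) := ⟨x₀.1⟩
  obtain ⟨μ, v, hμinj, hv0, hv, hLI⟩ := exists_eigenbasis (cmat W) hsimple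
  have hcardeq : Fintype.card (Fin m) = Module.finrank ℂ (Fin m → ℂ) := by
    simp
  let b : Module.Basis (Fin m) ℂ (Fin m → ℂ) := basisOfLinearIndependentOfCardEqFinrank hLI hcardeq
  have hb : ∀ i, b i = v i := fun i =>
    congrFun (coe_basisOfLinearIndependentOfCardEqFinrank hLI hcardeq) i
  set t : Fin m → Fin n → ℂ := fun i j => b.repr (fun k => q (k, j)) i with ht
  -- expansion of q in the eigenbasis
  have hqexp : ∀ k l, q (k, l) = ∑ i, t i l * v i k := by
    intro k l
    have := b.sum_repr (fun k => q (k, l))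
    have h2 := congrFun this k
    rw [Finset.sum_apply] at h2
    rw [← h2]
    refine Finset.sum_congr rfl fun i _ => ?_
    rw [hb, Pi.smul_apply, smul_eq_mul]
  -- the key coefficient identity
  have key : ∀ i j, μ i * (∑ l, cmat A j l * t i l) = lam * t i j := by
    intro i j
    have hsum : ∑ i', (μ i' * (∑ l, cmat A j l * t i' l) - lam * t i' j) • v i' = 0 := by
      funext k
      simp only [Finset.sum_apply, Pi.smul_apply, smul_eq_mul, Pi.zero_apply]
      have hq' := congrFun hq (k, j)
      have hL : ((cmat W ⊗ₖ cmat A).mulVec q) (k, j)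
          = ∑ i', (μ i' * (∑ l, cmat A j l * t i' l)) * v i' k := by
        show (∑ y : Fin m × Fin n, (cmat W ⊗ₖ cmat A) (k, j) y * q y) = _
        rw [Fintype.sum_prod_type]
        have step1 : ∀ k' l, (cmat W ⊗ₖ cmat A) (k, j) (k', l) * q (k', l)
            = ∑ i', (cmat A j l * t i' l) * (cmat W k k' * v i' k') := by
          intro k' l
          rw [Matrix.kroneckerMap_apply, hqexp k' l, Finset.mul_sum]
          exact Finset.sum_congr rfl fun i' _ => by ring
        calc (∑ k', ∑ l, (cmat W ⊗ₖ cmat A) (k, j) (k', l) * q (k', l))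
            = ∑ k', ∑ l, ∑ i', (cmat A j l * t i' l) * (cmat W k k' * v i' k') := by
              exact Finset.sum_congr rfl fun k' _ => Finset.sum_congr rfl fun l _ => step1 k' l
          _ = ∑ k', ∑ i', ∑ l, (cmat A j l * t i' l) * (cmat W k k' * v i' k') :=
              Finset.sum_congr rfl fun k' _ => Finset.sum_comm
          _ = ∑ i', ∑ k', ∑ l, (cmat A j l * t i' l) * (cmat W k k' * v i' k') :=
              Finset.sum_comm
          _ = ∑ i', ∑ l, ∑ k', (cmat A j l * t i' l) * (cmat W k k' * v i' k') :=
              Finset.sum_congr rfl fun i' _ => Finset.sum_comm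
          _ = ∑ i', (∑ l, cmat A j l * t i' l) * (∑ k', cmat W k k' * v i' k') := by
              refine Finset.sum_congr rfl fun i' _ => ?_
              rw [Finset.sum_mul_sum]
          _ = ∑ i', (μ i' * (∑ l, cmat A j l * t i' l)) * v i' k := by
              refine Finset.sum_congr rfl fun i' _ => ?_
              have h3 : (∑ k', cmat W k k' * v i' k') = ((cmat W).mulVec (v i')) k := rfl
              rw [h3, hv i', Pi.smul_apply, smul_eq_mul]
              ring
      have hR : ∑ i', (lam * t i' j) * v i' k = lam * q (k, j) := by
        rw [hqexp k j, Finset.mul_sum]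
        exact Finset.sum_congr rfl fun i' _ => by ring
      calc ∑ i', (μ i' * (∑ l, cmat A j l * t i' l) - lam * t i' j) * v i' k
          = (∑ i', (μ i' * (∑ l, cmat A j l * t i' l)) * v i' k)
            - ∑ i', (lam * t i' j) * v i' k := by
            rw [← Finset.sum_sub_distrib]
            exact Finset.sum_congr rfl fun i' _ => by ring
        _ = 0 := by
            rw [← hL, hR, hq', Pi.smul_apply, smul_eq_mul, sub_self]
    have h4 := Fintype.linearIndependent_iff.mp hLI
      (fun i' => μ i' * (∑ l, cmat A j l * t i' l) - lam * t i' j) hsum i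
    exact sub_eq_zero.mp h4
  -- nonzero rows of `t` give eigen-factorizations
  have hrow : ∀ i, t i ≠ 0 → μ i ≠ 0 ∧ (cmat A).mulVec (t i) = (lam / μ i) • t i := by
    intro i hti
    have hμi : μ i ≠ 0 := by
      intro h0
      apply hti
      funext j
      have h6 := key i j
      rw [h0, zero_mul] at h6
      exact ((mul_eq_zero.mp h6.symm).resolve_left hlam)
    refine ⟨hμi, ?_⟩
    funext j
    show ∑ l, cmat A j l * t i l = ((lam / μ i) • t i) j
    rw [Pi.smul_apply, smul_eq_mul, div_mul_eq_mul_div, eq_div_iff hμi]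
    linear_combination key i j
  obtain ⟨i0, hi0⟩ : ∃ i, t i ≠ 0 := by
    by_contra h
    push_neg at h
    apply hx₀
    have hx : q x₀ = q (x₀.1, x₀.2) := by rw [Prod.mk.eta]
    rw [hx, hqexp x₀.1 x₀.2]
    refine Finset.sum_eq_zero fun i _ => ?_
    rw [h i]
    simp
  have huniqrow : ∀ i, t i ≠ 0 → i = i0 := by
    intro i hti
    obtain ⟨hμi, hAi⟩ := hrow i hti
    obtain ⟨hμ0, hA0⟩ := hrow i0 hi0
    obtain ⟨-, huniq⟩ := huepp lam hlam ⟨q, hq0, hq⟩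
    have h7 := huniq (μ i) (lam / μ i) (μ i0) (lam / μ i0)
      ⟨v i, hv0 i, hv i⟩ ⟨t i, hti, hAi⟩ ⟨v i0, hv0 i0, hv i0⟩ ⟨t i0, hi0, hA0⟩
      (by field_simp) (by field_simp)
    exact hμinj h7.1
  obtain ⟨hμ0, hA0⟩ := hrow i0 hi0
  refine ⟨μ i0, lam / μ i0, v i0, t i0, hv0 i0, hi0, hv i0, hA0, by field_simp, ?_⟩
  funext x
  have hx : q x = q (x.1, x.2) := by rw [Prod.mk.eta]
  rw [hx, hqexp x.1 x.2]
  rw [Finset.sum_eq_single i0 (fun i _ hne => by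
        have h8 : t i = 0 := by
          by_contra h
          exact hne (huniqrow i h)
        rw [h8]
        simp)
      (fun h => absurd (Finset.mem_univ i0) h)]
  exact mul_comm _ _
end
end

section
/- Let W ∈ ℝ^{m×m} have all simple eigenvalues and let A ∈ ℝ^{n×n}, and suppose W ⊗ A satisfies the UEPP. For any nonzero eigenvalue λ of W ⊗ A with unique factorization λ = λ_W · λ_A (λ_W ∈ spectrum(W), λ_A ∈ spectrum(A)), the geometric multiplicity of λ as an eigenvalue of W ⊗ A equals the geometric multiplicity of λ_A as an eigenvalue of A. -/
open Matrix Kronecker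

noncomputable section

/-- Geometric multiplicity: dimension of the kernel of `M - λI` over `ℂ`. -/
def geomMult {ι : Type*} [Fintype ι] [DecidableEq ι] (M : Matrix ι ι ℂ) (lam : ℂ) : ℕ :=
  Module.finrank ℂ (LinearMap.ker (Matrix.toLin' (M - lam • (1 : Matrix ι ι ℂ))))

lemma eval_charpoly'' {k : ℕ} (M : Matrix (Fin k) (Fin k) ℂ) (μ : ℂ) :
    M.charpoly.eval μ = (μ • (1 : Matrix (Fin k) (Fin k) ℂ) - M).det := by
  rw [Matrix.charpoly, eval_det, Matrix.matPolyEquiv_charmatrix]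
  congr 1
  simp [Matrix.scalar, smul_one_eq_diagonal]

lemma root_isEig {k : ℕ} (M : Matrix (Fin k) (Fin k) ℂ) (μ : ℂ)
    (h : M.charpoly.IsRoot μ) : IsEig M μ := by
  have hdet : (μ • (1 : Matrix (Fin k) (Fin k) ℂ) - M).det = 0 := by
    rw [← eval_charpoly'']; exact h
  obtain ⟨v, hv, hmv⟩ := Matrix.exists_mulVec_eq_zero_iff.mpr hdet
  refine ⟨v, hv, ?_⟩
  rw [Matrix.sub_mulVec, Matrix.smul_mulVec, Matrix.one_mulVec, sub_eq_zero] at hmv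
  exact hmv.symm

lemma exists_eigenbasis_s3 {m : ℕ} (hm : 0 < m) (W : Matrix (Fin m) (Fin m) ℂ)
    (hsimple : ∀ μ : ℂ, IsEig W μ → W.charpoly.rootMultiplicity μ = 1) :
    ∃ (μf : Fin m → ℂ) (b : Module.Basis (Fin m) ℂ (Fin m → ℂ)),
      Function.Injective μf ∧ ∀ i, W.mulVec (b i) = μf i • b i := by
  classical
  set p := W.charpoly with hp
  have hdeg : p.natDegree = m := by rw [hp, W.charpoly_natDegree_eq_dim, Fintype.card_fin]
  have hsplits : p.Splits := IsAlgClosed.splits p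
  have hcard : Multiset.card p.roots = m := by
    rw [Polynomial.splits_iff_card_roots.mp hsplits, hdeg]
  have hnodup : p.roots.Nodup := by
    rw [Multiset.nodup_iff_count_le_one]
    intro μ
    rw [Polynomial.count_roots]
    by_cases h : p.IsRoot μ
    · rw [hsimple μ (root_isEig W μ h)]
    · rw [Polynomial.rootMultiplicity_eq_zero h]; norm_num
  have hfcard : p.roots.toFinset.card = m := by
    rw [Multiset.toFinset_card_of_nodup hnodup, hcard]
  let E : Fin m → {x // x ∈ p.roots.toFinset} :=
    fun i => p.roots.toFinset.equivFin.symm (finCongr hfcard.symm i)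
  let μf : Fin m → ℂ := fun i => (E i : ℂ)
  have hinj : Function.Injective μf := by
    intro i j hij
    have h1 : E i = E j := Subtype.ext hij
    have h2 := p.roots.toFinset.equivFin.symm.injective h1
    exact (finCongr hfcard.symm).injective h2
  have hroots : ∀ i, IsEig W (μf i) := fun i =>
    root_isEig W _ (Polynomial.isRoot_of_mem_roots (Multiset.mem_toFinset.mp (E i).2))
  choose v hv0 hveq using hroots
  have hli : LinearIndependent ℂ v := by
    apply Module.End.eigenvectors_linearIndependent' (Matrix.toLin' W) μf hinj v
    intro i
    exact ⟨Module.End.mem_eigenspace_iff.mpr (by rw [Matrix.toLin'_apply, hveq i]), hv0 i⟩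
  have : Nonempty (Fin m) := ⟨⟨0, hm⟩⟩
  have hcard2 : Fintype.card (Fin m) = Module.finrank ℂ (Fin m → ℂ) := by
    simp [Module.finrank_fin_fun]
  refine ⟨μf, basisOfLinearIndependentOfCardEqFinrank hli hcard2, hinj, fun i => ?_⟩
  rw [coe_basisOfLinearIndependentOfCardEqFinrank]
  exact hveq i

lemma exists_phi {m n : ℕ} (W : Matrix (Fin m) (Fin m) ℂ) (A : Matrix (Fin n) (Fin n) ℂ)
    (b : Module.Basis (Fin m) ℂ (Fin m → ℂ)) (μf : Fin m → ℂ)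
    (hb : ∀ i, W.mulVec (b i) = μf i • b i) :
    ∃ (Φ : (Fin m × Fin n → ℂ) ≃ₗ[ℂ] (Fin m → Fin n → ℂ)),
      ∀ z i, Φ ((W ⊗ₖ A).mulVec z) i = μf i • A.mulVec (Φ z i) := by
  classical
  let F : (Fin m × Fin n → ℂ) →ₗ[ℂ] (Fin m → Fin n → ℂ) :=
    { toFun := fun z i j => b.equivFun (fun k => z (k, j)) i
      map_add' := by
        intro z w; funext i j
        show b.equivFun ((fun k => z (k, j)) + fun k => w (k, j)) i = _
        rw [map_add]; rfl
      map_smul' := by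
        intro c z; funext i j
        show b.equivFun (c • fun k => z (k, j)) i = _
        rw [_root_.map_smul]; rfl }
  let G : (Fin m → Fin n → ℂ) →ₗ[ℂ] (Fin m × Fin n → ℂ) :=
    { toFun := fun c q => b.equivFun.symm (fun i => c i q.2) q.1
      map_add' := by
        intro z w; funext q
        show b.equivFun.symm ((fun i => z i q.2) + fun i => w i q.2) q.1 = _
        rw [map_add]; rfl
      map_smul' := by
        intro c z; funext q
        show b.equivFun.symm (c • fun i => z i q.2) q.1 = _
        rw [_root_.map_smul]; rfl }
  let Φ : (Fin m × Fin n → ℂ) ≃ₗ[ℂ] (Fin m → Fin n → ℂ) := by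
    refine LinearEquiv.ofLinear F G ?_ ?_
    · apply LinearMap.ext; intro c; funext i j
      show b.equivFun ((fun k => b.equivFun.symm (fun i' => c i' j) k)) i = c i j
      rw [show (fun k => b.equivFun.symm (fun i' => c i' j) k) = b.equivFun.symm (fun i' => c i' j) from rfl]
      rw [LinearEquiv.apply_symm_apply]
    · apply LinearMap.ext; intro z; funext q
      show b.equivFun.symm (fun i => b.equivFun (fun k => z (k, q.2)) i) q.1 = z q
      rw [show (fun i => b.equivFun (fun k => z (k, q.2)) i) = b.equivFun (fun k => z (k, q.2)) from rfl]
      rw [LinearEquiv.symm_apply_apply]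
  have hΦ : ∀ z i j, Φ z i j = b.equivFun (fun k => z (k, j)) i := fun z i j => rfl
  have hdiag : ∀ (x : Fin m → ℂ) i, b.equivFun (W.mulVec x) i = μf i * b.equivFun x i := by
    intro x i
    have h1 : W.mulVec x = ∑ i', b.equivFun x i' • (μf i' • b i') := by
      conv_lhs => rw [← b.sum_equivFun x]
      rw [← Matrix.mulVecLin_apply, map_sum]
      refine Finset.sum_congr rfl fun i' _ => ?_
      rw [_root_.map_smul, Matrix.mulVecLin_apply, hb]
    rw [h1, map_sum, Finset.sum_apply]
    simp only [_root_.map_smul, Pi.smul_apply, Module.Basis.equivFun_self, smul_eq_mul]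
    rw [Finset.sum_eq_single i]
    · simp [mul_comm]
    · intro i' _ hne; simp [hne]
    · intro h; exact absurd (Finset.mem_univ i) h
  refine ⟨Φ, fun z i => ?_⟩
  funext j
  have hcol : (fun k => ((W ⊗ₖ A).mulVec z) (k, j))
      = W.mulVec (fun k => ∑ l, A j l * z (k, l)) := by
    funext k
    simp only [Matrix.mulVec, dotProduct, Fintype.sum_prod_type, kroneckerMap_apply,
      Finset.mul_sum]
    exact Finset.sum_congr rfl fun k' _ => Finset.sum_congr rfl fun l _ => by ring
  have hsum : (fun k => ∑ l, A j l * z (k, l)) = ∑ l, A j l • (fun k => z (k, l)) := by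
    funext k; rw [Finset.sum_apply]; simp
  calc Φ ((W ⊗ₖ A).mulVec z) i j
      = b.equivFun (fun k => ((W ⊗ₖ A).mulVec z) (k, j)) i := hΦ _ i j
    _ = b.equivFun (W.mulVec (fun k => ∑ l, A j l * z (k, l))) i := by rw [hcol]
    _ = μf i * b.equivFun (fun k => ∑ l, A j l * z (k, l)) i := hdiag _ i
    _ = μf i * ∑ l, A j l * b.equivFun (fun k => z (k, l)) i := by
        rw [hsum, map_sum, Finset.sum_apply]
        simp only [_root_.map_smul, Pi.smul_apply, smul_eq_mul]
    _ = (μf i • A.mulVec (Φ z i)) j := by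
        simp only [Pi.smul_apply, smul_eq_mul, Matrix.mulVec, dotProduct]
        congr 1

/-- Under simplicity of the eigenvalues of `W` and the UEPP, the geometric multiplicity of a
nonzero eigenvalue `λ = λ_W · λ_A` of `W ⊗ A` equals the geometric multiplicity of `λ_A`
as an eigenvalue of `A`. -/
theorem stmt3 (m n : ℕ) (W : Matrix (Fin m) (Fin m) ℝ) (A : Matrix (Fin n) (Fin n) ℝ)
    (hsimple : ∀ μ : ℂ, IsEig (cmat W) μ → (cmat W).charpoly.rootMultiplicity μ = 1)
    (huepp : UEPP (cmat W) (cmat A))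
    (lam lamW lamA : ℂ) (hlam : lam ≠ 0)
    (hEig : IsEig (cmat W ⊗ₖ cmat A) lam)
    (hW : IsEig (cmat W) lamW) (hA : IsEig (cmat A) lamA)
    (hfac : lam = lamW * lamA) :
    geomMult (cmat W ⊗ₖ cmat A) lam = geomMult (cmat A) lamA := by
  classical
  rcases Nat.eq_zero_or_pos m with hm | hm
  · exfalso
    obtain ⟨v, hv, -⟩ := hW
    subst hm
    exact hv (funext fun k => k.elim0)
  obtain ⟨μf, b, hinj, hb⟩ := exists_eigenbasis_s3 hm (cmat W) hsimple
  obtain ⟨Φ, hkey⟩ := exists_phi (cmat W) (cmat A) b μf hb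
  set K := LinearMap.ker (Matrix.toLin'
    (cmat W ⊗ₖ cmat A - lam • (1 : Matrix (Fin m × Fin n) (Fin m × Fin n) ℂ))) with hKdef
  let keri : Fin m → Submodule ℂ (Fin n → ℂ) := fun i =>
    LinearMap.ker (Matrix.toLin' (μf i • cmat A - lam • (1 : Matrix (Fin n) (Fin n) ℂ)))
  have hmemK : ∀ z, z ∈ K ↔ (cmat W ⊗ₖ cmat A).mulVec z = lam • z := by
    intro z
    rw [hKdef, LinearMap.mem_ker, Matrix.toLin'_apply, Matrix.sub_mulVec,
      Matrix.smul_mulVec, Matrix.one_mulVec, sub_eq_zero]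
  have hmemker : ∀ i w, w ∈ keri i ↔ μf i • (cmat A).mulVec w = lam • w := by
    intro i w
    show _ ∈ LinearMap.ker _ ↔ _
    rw [LinearMap.mem_ker, Matrix.toLin'_apply, Matrix.sub_mulVec, Matrix.smul_mulVec,
      Matrix.smul_mulVec, Matrix.one_mulVec, sub_eq_zero]
  have hchar : ∀ z, z ∈ K ↔ ∀ i, Φ z i ∈ keri i := by
    intro z
    rw [hmemK]
    constructor
    · intro h i
      rw [hmemker, ← hkey z i, h, _root_.map_smul]
      rfl
    · intro h
      apply Φ.injective
      funext i
      rw [hkey z i, (hmemker i _).mp (h i), _root_.map_smul]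
      rfl
  let L : K →ₗ[ℂ] (∀ i, keri i) :=
    { toFun := fun z => fun i => ⟨Φ z.1 i, (hchar z.1).mp z.2 i⟩
      map_add' := by
        intro z w; funext i; apply Subtype.ext
        show Φ (z.1 + w.1) i = Φ z.1 i + Φ w.1 i
        rw [map_add]; rfl
      map_smul' := by
        intro c z; funext i; apply Subtype.ext
        show Φ (c • z.1) i = c • Φ z.1 i
        rw [_root_.map_smul]; rfl }
  have hLinj : Function.Injective L := by
    intro z w hzw
    apply Subtype.ext; apply Φ.injective; funext i
    exact congrArg Subtype.val (congrFun hzw i)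
  have hLsurj : Function.Surjective L := by
    intro g
    refine ⟨⟨Φ.symm (fun i => (g i : Fin n → ℂ)), ?_⟩, ?_⟩
    · rw [hchar]
      intro i
      rw [Φ.apply_symm_apply]
      exact (g i).2
    · funext i; apply Subtype.ext
      show Φ (Φ.symm (fun i => (g i : Fin n → ℂ))) i = (g i : Fin n → ℂ)
      rw [Φ.apply_symm_apply]
  have hWeig : ∀ i, IsEig (cmat W) (μf i) := fun i => ⟨b i, b.ne_zero i, hb i⟩
  have hforce : ∀ i (w : Fin n → ℂ), w ∈ keri i → w ≠ 0 → μf i = lamW := by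
    intro i w hw hw0
    have heq := (hmemker i w).mp hw
    have hμ0 : μf i ≠ 0 := by
      intro h
      rw [h, zero_smul] at heq
      rcases smul_eq_zero.mp heq.symm with h' | h'
      · exact hlam h'
      · exact hw0 h'
    have hAw : (cmat A).mulVec w = ((μf i)⁻¹ * lam) • w := by
      calc (cmat A).mulVec w = ((μf i)⁻¹ * μf i) • (cmat A).mulVec w := by
            rw [inv_mul_cancel₀ hμ0, one_smul]
        _ = (μf i)⁻¹ • (lam • w) := by rw [← smul_smul, heq]
        _ = ((μf i)⁻¹ * lam) • w := by rw [smul_smul]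
    have hfac2 : lam = μf i * ((μf i)⁻¹ * lam) := by
      rw [← mul_assoc, mul_inv_cancel₀ hμ0, one_mul]
    exact ((huepp lam hlam hEig).2 (μf i) ((μf i)⁻¹ * lam) lamW lamA
      (hWeig i) ⟨w, hw0, hAw⟩ hW hA hfac2 hfac).1
  have hzero : ∀ i, μf i ≠ lamW → keri i = ⊥ := by
    intro i hi
    rw [Submodule.eq_bot_iff]
    intro w hw
    by_contra hw0
    exact hi (hforce i w hw hw0)
  obtain ⟨z0, hz00, hz0⟩ := hEig
  have hz0K : z0 ∈ K := (hmemK z0).mpr hz0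
  have hΦz0 : Φ z0 ≠ 0 := fun h => hz00 (by
    apply Φ.injective; rw [h, map_zero])
  obtain ⟨i0, hi0ne⟩ : ∃ i, Φ z0 i ≠ 0 := by
    by_contra h
    push_neg at h
    exact hΦz0 (funext h)
  have hi0 : μf i0 = lamW := hforce i0 (Φ z0 i0) ((hchar z0).mp hz0K i0) hi0ne
  have hlamW0 : lamW ≠ 0 := fun h => hlam (by rw [hfac, h, zero_mul])
  have h2 : Module.finrank ℂ K = ∑ i, Module.finrank ℂ (keri i) := by
    rw [LinearEquiv.finrank_eq (LinearEquiv.ofBijective L ⟨hLinj, hLsurj⟩)]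
    exact Module.finrank_pi_fintype ℂ
  have h3 : ∑ i, Module.finrank ℂ (keri i) = Module.finrank ℂ (keri i0) := by
    apply Finset.sum_eq_single_of_mem i0 (Finset.mem_univ _)
    intro i _ hne
    rw [hzero i (fun h => hne (hinj (h.trans hi0.symm)))]
    exact finrank_bot ℂ _
  have h4 : keri i0 = LinearMap.ker
      (Matrix.toLin' (cmat A - lamA • (1 : Matrix (Fin n) (Fin n) ℂ))) := by
    have hmat : μf i0 • cmat A - lam • (1 : Matrix (Fin n) (Fin n) ℂ)
        = lamW • (cmat A - lamA • (1 : Matrix (Fin n) (Fin n) ℂ)) := by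
      rw [hi0, smul_sub, smul_smul, hfac]
    show LinearMap.ker _ = _
    rw [hmat, _root_.map_smul, LinearMap.ker_smul _ lamW hlamW0]
  show Module.finrank ℂ K
    = Module.finrank ℂ (LinearMap.ker (Matrix.toLin'
        (cmat A - lamA • (1 : Matrix (Fin n) (Fin n) ℂ))))
  rw [h2, h3, h4]
end
end

section
/- Let l₁, …, l_m ∈ ℝ^m be fixed vectors and define, for positive scalars α₁, …, α_m, the matrix L(α) whose i-th row is α_i l_iᵀ. Suppose for some choice α₁,…,α_k > 0 the matrix with rows α₁l₁ᵀ,…,α_k l_kᵀ and remaining rows zero has all eigenvalues simple except for the eigenvalue 0. Then for all sufficiently small α_{k+1} > 0, the matrix with rows α₁l₁ᵀ,…,α_{k+1} l_{k+1}ᵀ and remaining rows zero also has all nonzero eigenvalues simple. -/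
open Matrix

noncomputable section

lemma charmatrix_map_eval {m : ℕ} (M : Matrix (Fin m) (Fin m) ℂ) (μ : ℂ) :
    (Matrix.charmatrix M).map (Polynomial.eval μ) = μ • (1 : Matrix (Fin m) (Fin m) ℂ) - M := by
  ext i j
  by_cases h : i = j
  · subst h; simp [Matrix.charmatrix_apply_eq, Matrix.one_apply]
  · simp [Matrix.charmatrix_apply_ne _ _ _ h, Matrix.one_apply, h]

lemma isEig_iff_isRoot {m : ℕ} (M : Matrix (Fin m) (Fin m) ℂ) (μ : ℂ) :
    IsEig M μ ↔ M.charpoly.IsRoot μ := by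
  have h1 : M.charpoly.eval μ = (μ • (1 : Matrix (Fin m) (Fin m) ℂ) - M).det := by
    rw [Matrix.charpoly, ← charmatrix_map_eval M μ]
    exact (Polynomial.evalRingHom μ).map_det _
  have h2 : IsEig M μ ↔ ∃ v : Fin m → ℂ, v ≠ 0 ∧
      (μ • (1 : Matrix (Fin m) (Fin m) ℂ) - M).mulVec v = 0 := by
    unfold IsEig
    refine exists_congr fun v => and_congr_right fun _ => ?_
    rw [Matrix.sub_mulVec, Matrix.smul_mulVec, Matrix.one_mulVec, sub_eq_zero, eq_comm]
  rw [h2, Polynomial.IsRoot, h1]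
  constructor
  · rintro ⟨v, hv, hv2⟩
    exact Matrix.exists_mulVec_eq_zero_iff.mp ⟨v, hv, hv2⟩
  · intro h
    obtain ⟨v, hv, hv2⟩ := Matrix.exists_mulVec_eq_zero_iff.mpr h
    exact ⟨v, hv, hv2⟩

lemma charpoly_affine {m k : ℕ} (hk : k < m) (l : Fin m → Fin m → ℝ) (α : Fin m → ℝ) :
    ∃ Q : Polynomial ℂ, ∀ β : ℝ,
      (cmat (Matrix.of fun i j : Fin m =>
          if (i : ℕ) < k then α i * l i j
          else if (i : ℕ) = k then β * l ⟨k, hk⟩ j else 0)).charpoly =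
      (cmat (Matrix.of fun i j : Fin m =>
          if (i : ℕ) < k then α i * l i j else 0)).charpoly
        + Polynomial.C (β : ℂ) * Q := by
  set kk : Fin m := ⟨k, hk⟩ with hkk
  set M₀ := cmat (Matrix.of fun i j : Fin m => if (i : ℕ) < k then α i * l i j else 0) with hM₀
  refine ⟨((Matrix.charmatrix M₀).updateRow kk
      (fun j => -Polynomial.C ((l kk j : ℝ) : ℂ))).det, fun β => ?_⟩
  set Mβ := cmat (Matrix.of fun i j : Fin m =>
      if (i : ℕ) < k then α i * l i j else if (i : ℕ) = k then β * l kk j else 0) with hMβ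
  have hmain : Matrix.charmatrix Mβ = (Matrix.charmatrix M₀).updateRow kk
      ((fun j => Matrix.charmatrix M₀ kk j) +
        Polynomial.C (β : ℂ) • fun j => -Polynomial.C ((l kk j : ℝ) : ℂ)) := by
    refine Matrix.ext fun i j => ?_
    rcases eq_or_ne i kk with rfl | hi
    · have hik : ¬ ((kk : ℕ) < k) := by simp [hkk]
      have hik2 : (kk : ℕ) = k := rfl
      rw [Matrix.updateRow_self]
      simp only [Pi.add_apply, Pi.smul_apply, smul_eq_mul, Matrix.charmatrix_apply]
      rw [hMβ, hM₀]
      simp only [cmat, Matrix.map_apply, Matrix.of_apply, hik, hik2, if_false, if_true,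
        if_neg hik, map_zero, _root_.map_mul]
      simp only [Complex.coe_algebraMap, lt_self_iff_false, if_false, Complex.ofReal_mul,
        Complex.ofReal_zero, map_zero, _root_.map_mul]
      ring
    · have hik : ¬ ((i : ℕ) = k) := by
        intro h; exact hi (Fin.ext h)
      rw [Matrix.updateRow_ne hi, Matrix.charmatrix_apply, Matrix.charmatrix_apply,
        hMβ, hM₀]
      simp only [cmat, Matrix.map_apply, Matrix.of_apply, hik, if_false]
  rw [Matrix.charpoly, hmain, Matrix.det_updateRow_add, Matrix.det_updateRow_smul,
    Matrix.updateRow_eq_self, ← Matrix.charpoly]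

/-- All nonzero eigenvalues of `M` are simple (algebraic multiplicity one). -/
def SimpleNonzeroEigs {ι : Type*} [Fintype ι] [DecidableEq ι] (M : Matrix ι ι ℂ) : Prop :=
  ∀ μ : ℂ, μ ≠ 0 → IsEig M μ → M.charpoly.rootMultiplicity μ = 1

/-- Inductive step: if the matrix with rows `α₁l₁ᵀ,…,α_k l_kᵀ` (and remaining rows zero)
has all nonzero eigenvalues simple, then for all sufficiently small `α_{k+1} > 0`, so does
the matrix with rows `α₁l₁ᵀ,…,α_{k+1}l_{k+1}ᵀ` and remaining rows zero. -/
theorem stmt9 (m k : ℕ) (hk : k < m) (l : Fin m → Fin m → ℝ) (α : Fin m → ℝ)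
    (hα : ∀ i : Fin m, (i : ℕ) < k → 0 < α i)
    (h0 : SimpleNonzeroEigs
      (cmat (Matrix.of fun i j : Fin m => if (i : ℕ) < k then α i * l i j else 0))) :
    ∃ ε > (0 : ℝ), ∀ β : ℝ, 0 < β → β < ε →
      SimpleNonzeroEigs
        (cmat (Matrix.of fun i j : Fin m =>
          if (i : ℕ) < k then α i * l i j
          else if (i : ℕ) = k then β * l ⟨k, hk⟩ j else 0)) := by
  classical
  obtain ⟨Q, key⟩ := charpoly_affine hk l α
  set M₀ := cmat (Matrix.of fun i j : Fin m => if (i : ℕ) < k then α i * l i j else 0) with hM₀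
  set P := M₀.charpoly with hPdef
  have hm1 : 1 ≤ m := by omega
  have hPm : P.Monic := Matrix.charpoly_monic _
  have hPne : P ≠ 0 := hPm.ne_zero
  have hPd : P.natDegree = m := by
    rw [hPdef, Matrix.charpoly_natDegree_eq_dim, Fintype.card_fin]
  -- derivative of P facts
  have hmm : m - 1 + 1 = m := Nat.succ_pred_eq_of_pos hm1
  have hcoeffPm : P.coeff m = 1 := by rw [← hPd]; exact hPm.coeff_natDegree
  have hP'c : (Polynomial.derivative P).coeff (m - 1) = (m : ℂ) := by
    rw [Polynomial.coeff_derivative, hmm, hcoeffPm, one_mul, ← Nat.cast_add_one, hmm]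
  have hmC : (m : ℂ) ≠ 0 := Nat.cast_ne_zero.mpr (by omega)
  have hP'ne : Polynomial.derivative P ≠ 0 := by
    intro h; rw [h, Polynomial.coeff_zero] at hP'c; exact hmC hP'c.symm
  by_cases hQ : Q = 0
  · refine ⟨1, one_pos, fun β hβ hβ1 μ hμ heig => ?_⟩
    have hch := key β
    rw [hQ, mul_zero, add_zero] at hch
    rw [hch]
    exact h0 μ hμ ((isEig_iff_isRoot _ _).mpr
      (by rw [← hPdef, ← hch]; exact (isEig_iff_isRoot _ _).mp heig))
  · -- degree of Q is < m
    have hPQ : P + Q = (cmat (Matrix.of fun i j : Fin m =>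
        if (i : ℕ) < k then α i * l i j
        else if (i : ℕ) = k then (1:ℝ) * l ⟨k, hk⟩ j else 0)).charpoly := by
      rw [key 1]; norm_num
    have hPQm : (P + Q).Monic := by rw [hPQ]; exact Matrix.charpoly_monic _
    have hPQd : (P + Q).natDegree = m := by
      rw [hPQ, Matrix.charpoly_natDegree_eq_dim, Fintype.card_fin]
    have hdegPQ : (P + Q).degree = P.degree := by
      rw [Polynomial.degree_eq_natDegree hPQm.ne_zero, Polynomial.degree_eq_natDegree hPne,
        hPQd, hPd]
    have hdegQ : Q.degree < P.degree := by
      have h2 := Polynomial.degree_sub_lt hdegPQ hPQm.ne_zero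
        (by rw [hPQm.leadingCoeff, hPm.leadingCoeff])
      rwa [add_sub_cancel_left, hdegPQ] at h2
    have hQnd : Q.natDegree < m := by
      rw [← hPd]; exact Polynomial.natDegree_lt_natDegree hQ hdegQ
    set W := P * Polynomial.derivative Q - Polynomial.derivative P * Q with hWdef
    have hW : W ≠ 0 := by
      by_cases hdQ : Q.natDegree = 0
      · have hQ' : Polynomial.derivative Q = 0 := by
          rw [Polynomial.eq_C_of_natDegree_eq_zero hdQ]; simp
        rw [hWdef, hQ', mul_zero, zero_sub, neg_ne_zero]
        exact mul_ne_zero hP'ne hQ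
      · -- natDegree Q ≥ 1
        set dQ := Q.natDegree with hdQdef
        have hdQ1 : 1 ≤ dQ := by omega
        have hdd : dQ - 1 + 1 = dQ := Nat.succ_pred_eq_of_pos hdQ1
        have hc : Q.leadingCoeff ≠ 0 := Polynomial.leadingCoeff_ne_zero.mpr hQ
        have hQ'c : (Polynomial.derivative Q).coeff (dQ - 1) =
            Q.leadingCoeff * (dQ : ℂ) := by
          rw [Polynomial.coeff_derivative, hdd, ← Nat.cast_add_one, hdd]; rfl
        have hQ'ne0 : Q.leadingCoeff * (dQ : ℂ) ≠ 0 :=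
          mul_ne_zero hc (Nat.cast_ne_zero.mpr (by omega))
        have hQ'ne : Polynomial.derivative Q ≠ 0 := by
          intro h; rw [h, Polynomial.coeff_zero] at hQ'c; exact hQ'ne0 hQ'c.symm
        have hQ'nd : (Polynomial.derivative Q).natDegree = dQ - 1 :=
          le_antisymm (Polynomial.natDegree_derivative_le Q)
            (Polynomial.le_natDegree_of_ne_zero (by rw [hQ'c]; exact hQ'ne0))
        have hP'nd : (Polynomial.derivative P).natDegree = m - 1 :=
          le_antisymm (by simpa [hPd] using Polynomial.natDegree_derivative_le P)
            (Polynomial.le_natDegree_of_ne_zero (by rw [hP'c]; exact hmC))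
        have hQ'lead : (Polynomial.derivative Q).leadingCoeff = Q.leadingCoeff * dQ := by
          rw [Polynomial.leadingCoeff, hQ'nd, hQ'c]
        have hP'lead : (Polynomial.derivative P).leadingCoeff = (m : ℂ) := by
          rw [Polynomial.leadingCoeff, hP'nd, hP'c]
        have hcoeff1 : (P * Polynomial.derivative Q).coeff (m - 1 + dQ) =
            Q.leadingCoeff * dQ := by
          have := Polynomial.coeff_mul_degree_add_degree P (Polynomial.derivative Q)
          rw [hPd, hQ'nd, hPm.leadingCoeff, hQ'lead, one_mul] at this
          rw [show m - 1 + dQ = m + (dQ - 1) by omega]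
          exact this
        have hcoeff2 : (Polynomial.derivative P * Q).coeff (m - 1 + dQ) =
            (m : ℂ) * Q.leadingCoeff := by
          have := Polynomial.coeff_mul_degree_add_degree (Polynomial.derivative P) Q
          rwa [hP'nd, hP'lead] at this
        intro h
        have : W.coeff (m - 1 + dQ) = 0 := by rw [h, Polynomial.coeff_zero]
        rw [hWdef, Polynomial.coeff_sub, hcoeff1, hcoeff2] at this
        have hcast : (dQ : ℂ) ≠ (m : ℂ) := by
          exact_mod_cast (by omega : dQ ≠ m)
        have hne : Q.leadingCoeff * (dQ : ℂ) - (m : ℂ) * Q.leadingCoeff ≠ 0 := by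
          intro hx
          apply hcast
          have hx2 : Q.leadingCoeff * (dQ : ℂ) = Q.leadingCoeff * (m : ℂ) := by
            rw [sub_eq_zero] at hx; rw [hx]; ring
          exact mul_left_cancel₀ hc hx2
        exact hne this
    set Bc : Finset ℂ :=
      (W.roots.toFinset.image fun μ => -(P.eval μ) / (Q.eval μ)) ∪
      (W.roots.toFinset.image fun μ =>
        -((Polynomial.derivative P).eval μ) / ((Polynomial.derivative Q).eval μ)) with hBc
    set s : Finset ℝ := (Bc.image Complex.re).filter (fun x => 0 < x) with hs
    refine ⟨if h : s.Nonempty then min 1 (s.min' h) else 1, ?_, ?_⟩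
    · split_ifs with h
      · refine lt_min one_pos ?_
        exact (Finset.mem_filter.mp (s.min'_mem h)).2
      · exact one_pos
    · intro β hβ0 hβε μ hμ heig
      rw [key β]
      have hp0 : P + Polynomial.C (β:ℂ) * Q ≠ 0 := by
        have hmon : (P + Polynomial.C (β:ℂ) * Q).Monic := by
          rw [← key β]; exact Matrix.charpoly_monic _
        exact hmon.ne_zero
      have hroot : (P + Polynomial.C (β:ℂ) * Q).IsRoot μ := by
        rw [← key β]; exact (isEig_iff_isRoot _ _).mp heig
      have hpos : 0 < (P + Polynomial.C (β:ℂ) * Q).rootMultiplicity μ :=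
        (Polynomial.rootMultiplicity_pos hp0).mpr hroot
      have hnotlt : ¬ 1 < (P + Polynomial.C (β:ℂ) * Q).rootMultiplicity μ := by
        intro hgt
        rw [Polynomial.one_lt_rootMultiplicity_iff_isRoot hp0] at hgt
        obtain ⟨h1, h2⟩ := hgt
        rw [Polynomial.IsRoot, Polynomial.eval_add, Polynomial.eval_mul,
          Polynomial.eval_C] at h1
        rw [Polynomial.IsRoot, Polynomial.derivative_add, Polynomial.derivative_C_mul,
          Polynomial.eval_add, Polynomial.eval_mul, Polynomial.eval_C] at h2
        have hWμ : W.eval μ = 0 := by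
          rw [hWdef, Polynomial.eval_sub, Polynomial.eval_mul, Polynomial.eval_mul]
          have ha : P.eval μ = -(β:ℂ) * Q.eval μ := by linear_combination h1
          have ha' : (Polynomial.derivative P).eval μ
              = -(β:ℂ) * (Polynomial.derivative Q).eval μ := by linear_combination h2
          rw [ha, ha']; ring
        have hμW : μ ∈ W.roots.toFinset := by
          rw [Multiset.mem_toFinset, Polynomial.mem_roots hW]
          exact hWμ
        have hmemBc : (β : ℂ) ∈ Bc := by
          rw [hBc]
          by_cases hb : Q.eval μ = 0
          · have ha : P.eval μ = 0 := by
              rw [hb, mul_zero, add_zero] at h1; exact h1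
            by_cases hb' : (Polynomial.derivative Q).eval μ = 0
            · have ha' : (Polynomial.derivative P).eval μ = 0 := by
                rw [hb', mul_zero, add_zero] at h2; exact h2
              exfalso
              have hgt2 : 1 < P.rootMultiplicity μ :=
                (Polynomial.one_lt_rootMultiplicity_iff_isRoot hPne).mpr ⟨ha, ha'⟩
              have heq := h0 μ hμ ((isEig_iff_isRoot _ _).mpr ha)
              rw [← hPdef] at heq
              omega
            · refine Finset.mem_union_right _ (Finset.mem_image.mpr ⟨μ, hμW, ?_⟩)
              rw [div_eq_iff hb']; linear_combination -h2
          · refine Finset.mem_union_left _ (Finset.mem_image.mpr ⟨μ, hμW, ?_⟩)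
            rw [div_eq_iff hb]; linear_combination -h1
        have hβs : β ∈ s := by
          rw [hs, Finset.mem_filter]
          exact ⟨Finset.mem_image.mpr ⟨(β:ℂ), hmemBc, Complex.ofReal_re β⟩, hβ0⟩
        have hsne : s.Nonempty := ⟨β, hβs⟩
        rw [dif_pos hsne] at hβε
        have h4 := s.min'_le β hβs
        have h5 := min_le_right (1:ℝ) (s.min' hsne)
        linarith
      omega
end
end

section
/- Let A ∈ ℝ^{n×n}, W₁ ∈ ℝ^{m₁×m₁}, and let H̄ be the block-diagonal-style measurement matrix with block rows H̄_i = e_iᵀ ⊗ H_i for matrices H_i ∈ ℝ^{r_i×n}. Suppose: (a) every eigenvalue λ of W₁ ⊗ A with |λ| ≥ 1 has all its eigenvectors of the form v ⊗ p with v an eigenvector of W₁ having no zero entries and p an eigenvector of A for an eigenvalue λ_A with |λ_A| ≥ 1; and (b) the pair (A, H) with H the vertical stack of H₁,…,H_{m₁} is detectable, i.e., rank([A − λ_A I; H]) = n for every λ_A with |λ_A| ≥ 1. Then for every λ with |λ| ≥ 1, rank([W₁ ⊗ A − λ I_{m₁n}; H̄]) = m₁·n. -/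
open Matrix Kronecker

noncomputable section

lemma rank_eq_card_iff_kerTrivial {m nn : Type*} [Fintype m] [Fintype nn] [DecidableEq nn]
    (M : Matrix m nn ℂ) :
    M.rank = Fintype.card nn ↔ ∀ x : nn → ℂ, M.mulVec x = 0 → x = 0 := by
  have h := LinearMap.finrank_range_add_finrank_ker M.mulVecLin
  rw [Module.finrank_pi] at h
  rw [Matrix.rank]
  constructor
  · intro hr x hx
    have hker : Module.finrank ℂ (LinearMap.ker M.mulVecLin) = 0 := by omega
    have := Submodule.finrank_eq_zero.mp hker
    have hmem : x ∈ LinearMap.ker M.mulVecLin := by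
      simpa [LinearMap.mem_ker] using hx
    simpa [this] using hmem
  · intro hx
    have : LinearMap.ker M.mulVecLin = ⊥ := by
      ext y; simp only [LinearMap.mem_ker, Submodule.mem_bot, Matrix.mulVecLin_apply]
      exact ⟨hx y, fun h => by simp [h]⟩
    rw [this] at h
    simpa using h

/-- PBH detectability of the pair `(W₁ ⊗ A, H̄)` at unstable eigenvalues, where
`H̄` has block rows `e_iᵀ ⊗ H_i`, assuming (a) every unstable eigenvector of `W₁ ⊗ A`
is of the form `v ⊗ p` with `v` entrywise nonzero and `p` an unstable eigenvector of `A`,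
and (b) the pair `(A, H)` is detectable. -/
theorem stmt15 (n m₁ : ℕ) (r : Fin m₁ → ℕ)
    (A : Matrix (Fin n) (Fin n) ℝ) (W₁ : Matrix (Fin m₁) (Fin m₁) ℝ)
    (H : (i : Fin m₁) → Matrix (Fin (r i)) (Fin n) ℝ)
    (ha : ∀ lam : ℂ, 1 ≤ ‖lam‖ →
      ∀ q : Fin m₁ × Fin n → ℂ, q ≠ 0 →
        (cmat W₁ ⊗ₖ cmat A).mulVec q = lam • q →
        ∃ (v : Fin m₁ → ℂ) (p : Fin n → ℂ) (lamW lamA : ℂ),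
          (∀ i, v i ≠ 0) ∧ p ≠ 0 ∧
          (cmat W₁).mulVec v = lamW • v ∧ (cmat A).mulVec p = lamA • p ∧
          1 ≤ ‖lamA‖ ∧ lam = lamW * lamA ∧ q = fun x => v x.1 * p x.2)
    (hb : ∀ μ : ℂ, 1 ≤ ‖μ‖ →
      (Matrix.fromRows (cmat A - μ • (1 : Matrix (Fin n) (Fin n) ℂ))
        (Matrix.of fun (x : Σ i : Fin m₁, Fin (r i)) (j : Fin n) =>
          ((H x.1 x.2 j : ℝ) : ℂ))).rank = n) :
    ∀ lam : ℂ, 1 ≤ ‖lam‖ →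
      (Matrix.fromRows ((cmat W₁ ⊗ₖ cmat A) - lam • (1 : Matrix (Fin m₁ × Fin n) (Fin m₁ × Fin n) ℂ))
        (Matrix.of fun (x : Σ i : Fin m₁, Fin (r i)) (y : Fin m₁ × Fin n) =>
          if x.1 = y.1 then ((H x.1 x.2 y.2 : ℝ) : ℂ) else 0)).rank = m₁ * n := by
  intro lam hlam
  rw [show m₁ * n = Fintype.card (Fin m₁ × Fin n) by simp, rank_eq_card_iff_kerTrivial]
  intro q hq
  by_contra hq0
  rw [Matrix.fromRows_mulVec] at hq
  have h1 : ((cmat W₁ ⊗ₖ cmat A) - lam • 1).mulVec q = 0 := by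
    funext i; exact congrFun hq (Sum.inl i)
  have h2 : ∀ x : Σ i : Fin m₁, Fin (r i),
      ((Matrix.of fun (x : Σ i : Fin m₁, Fin (r i)) (y : Fin m₁ × Fin n) =>
        if x.1 = y.1 then ((H x.1 x.2 y.2 : ℝ) : ℂ) else 0).mulVec q) x = 0 :=
    fun x => congrFun hq (Sum.inr x)
  have heig : (cmat W₁ ⊗ₖ cmat A).mulVec q = lam • q := by
    rwa [Matrix.sub_mulVec, sub_eq_zero, Matrix.smul_mulVec, Matrix.one_mulVec] at h1
  obtain ⟨v, p, lamW, lamA, hv, hp, hvW, hpA, hlamA, hlm, hqvp⟩ := ha lam hlam q hq0 heig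
  have Hp0 : ∀ (i : Fin m₁) (j : Fin (r i)),
      ∑ k, ((H i j k : ℝ) : ℂ) * p k = 0 := by
    intro i j
    have := h2 ⟨i, j⟩
    simp only [Matrix.mulVec, dotProduct, Matrix.of_apply, hqvp] at this
    rw [Fintype.sum_prod_type,
      Finset.sum_eq_single i (fun b _ hbne => by simp [Ne.symm hbne]) (by simp)] at this
    simp only [if_pos rfl] at this
    have hvne := hv i
    have hsum : v i * ∑ k, ((H i j k : ℝ) : ℂ) * p k = 0 := by
      rw [Finset.mul_sum, ← this]
      exact Finset.sum_congr rfl fun k _ => by rw [if_pos trivial]; ring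
    rcases mul_eq_zero.mp hsum with h | h
    · exact absurd h hvne
    · exact h
  have hrank := hb lamA hlamA
  have hker := (rank_eq_card_iff_kerTrivial _).mp (by rw [Fintype.card_fin]; exact hrank)
  refine hp (hker p ?_)
  rw [Matrix.fromRows_mulVec]
  funext x
  cases x with
  | inl i =>
    simp only [Sum.elim_inl, Matrix.sub_mulVec, Matrix.smul_mulVec, Matrix.one_mulVec,
      hpA, Pi.zero_apply, Pi.sub_apply, sub_self]
  | inr x =>
    simpa [Matrix.mulVec, dotProduct] using Hp0 x.1 x.2
end
end

section
/- Let A ∈ ℝ^{n×n} and suppose the pair (A, H) (H the vertical stack of H₁,…,H_m) is NOT detectable, i.e., there exists μ ∈ ℂ with |μ| ≥ 1 and a nonzero p ∈ ℂⁿ with Ap = μp and Hp = 0. Let W ∈ ℝ^{m×m} be any row-stochastic matrix (rows sum to 1). Then the pair (W ⊗ A, H̄), where H̄ has block rows e_iᵀ ⊗ H_i, is not detectable: the vector 𝟙 ⊗ p (with 𝟙 the all-ones vector) satisfies (W ⊗ A)(𝟙 ⊗ p) = μ(𝟙 ⊗ p) and H̄(𝟙 ⊗ p) = 0, and |μ|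 ≥ 1. -/
open Matrix Kronecker

noncomputable section

/-- Necessity: an undetectable unstable mode `(μ, p)` of `(A, H)` lifts, for any
row-stochastic weight matrix `W`, to the undetectable unstable mode `(μ, 𝟙 ⊗ p)` of the
pair `(W ⊗ A, H̄)`. -/
theorem stmt16 (n m : ℕ) (hm : 0 < m) (r : Fin m → ℕ)
    (A : Matrix (Fin n) (Fin n) ℝ) (W : Matrix (Fin m) (Fin m) ℝ)
    (H : (i : Fin m) → Matrix (Fin (r i)) (Fin n) ℝ)
    (hWpos : ∀ i j, 0 ≤ W i j) (hWrow : ∀ i, ∑ j, W i j = 1)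
    (μ : ℂ) (hμ : 1 ≤ ‖μ‖)
    (p : Fin n → ℂ) (hp : p ≠ 0)
    (hAp : (cmat A).mulVec p = μ • p)
    (hHp : ∀ i, ((H i).map (algebraMap ℝ ℂ)).mulVec p = 0) :
    (fun x : Fin m × Fin n => p x.2) ≠ 0 ∧
    (cmat W ⊗ₖ cmat A).mulVec (fun x : Fin m × Fin n => p x.2) =
      μ • (fun x : Fin m × Fin n => p x.2) ∧
    (Matrix.of fun (x : Σ i : Fin m, Fin (r i)) (y : Fin m × Fin n) =>
        if x.1 = y.1 then ((H x.1 x.2 y.2 : ℝ) : ℂ) else 0).mulVec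
      (fun x : Fin m × Fin n => p x.2) = 0 := by
  refine ⟨?_, ?_, ?_⟩
  · intro h
    apply hp
    funext j
    have := congrFun h (⟨0, hm⟩, j)
    simpa using this
  · funext x
    obtain ⟨i, k⟩ := x
    have hA : ∑ j, cmat A k j * p j = μ * p k := by
      have := congrFun hAp k
      simpa [Matrix.mulVec, dotProduct] using this
    calc ((cmat W ⊗ₖ cmat A).mulVec fun x : Fin m × Fin n => p x.2) (i, k)
        = ∑ l, ∑ j, cmat W i l * (cmat A k j * p j) := by
          simp [Matrix.mulVec, dotProduct, Matrix.kroneckerMap_apply,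
            Fintype.sum_prod_type, mul_assoc]
      _ = ∑ l, cmat W i l * (μ * p k) := by
          refine Finset.sum_congr rfl fun l _ => ?_
          rw [← Finset.mul_sum, hA]
      _ = (∑ l, cmat W i l) * (μ * p k) := by rw [Finset.sum_mul]
      _ = μ * p k := by
          have : (∑ l, cmat W i l) = 1 := by
            simp only [cmat, Matrix.map_apply]
            rw [← map_sum]
            rw [hWrow i]; simp
          rw [this, one_mul]
      _ = (μ • fun x : Fin m × Fin n => p x.2) (i, k) := rfl
  · funext x
    obtain ⟨i, k⟩ := x
    have hH : ∑ j, ((H i).map (algebraMap ℝ ℂ)) k j * p j = 0 := by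
      have := congrFun (hHp i) k
      simpa [Matrix.mulVec, dotProduct] using this
    simp only [Matrix.mulVec, dotProduct, Matrix.of_apply, Pi.zero_apply,
      Fintype.sum_prod_type]
    calc ∑ l, ∑ j, (if i = l then ((H i k j : ℝ) : ℂ) else 0) * p j
        = ∑ l, if i = l then ∑ j, ((H i k j : ℝ) : ℂ) * p j else 0 := by
          refine Finset.sum_congr rfl fun l _ => ?_
          split <;> simp
      _ = ∑ j, ((H i k j : ℝ) : ℂ) * p j := by simp
      _ = 0 := by simpa [Matrix.map_apply] using hH
end
end
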